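/- For all m, n ≥ 1, det((C_{i+j+m})_{i,j=0}^{n-1}) = ∏_{j=1}^{m-1} ∏_{i=1}^{j} (2n+i+j)/(i+j), where C_k denotes the k-th Catalan number. -/

import Mathlib

open Matrix Finset

section DJ
variable {R : Type*} [CommRing R]

lemma myDetUpdateRowSum {N : Type*} [DecidableEq N] [Fintype N]
    (A : Matrix N N R) (j : N) (c : N → R) (u : N → N → R) (s : Finset N) :
    (A.updateRow j (∑ k ∈ s, c k • u k)).det = ∑ k ∈ s, c k * (A.updateRow j (u k)).det := by
  classical
  induction s using Finset.induction_on with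
  | empty =>
      rw [Finset.sum_empty, Finset.sum_empty,
        show (0 : N → R) = (0 : R) • (fun _ => (0:R)) by simp, Matrix.det_updateRow_smul]
      simp
  | insert _ _ hk ih =>
      rw [Finset.sum_insert hk, Matrix.det_updateRow_add, Matrix.det_updateRow_smul,
        Finset.sum_insert hk, ih]

lemma myUpdateRowComm {N : Type*} [DecidableEq N] [Fintype N]
    (A : Matrix N N R) {i j : N} (h : i ≠ j) (u v : N → R) :
    (A.updateRow i u).updateRow j v = (A.updateRow j v).updateRow i u := by
  ext a b
  simp only [Matrix.updateRow_apply]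
  split_ifs with h1 h2 <;> simp_all

lemma myDval {n : ℕ} (M : Matrix (Fin (n+2)) (Fin (n+2)) R) (j k : Fin (n+2)) :
    ((M.updateRow 0 (M j)).updateRow (Fin.last (n+1)) (M k)).det
      = ((if j = 0 then (1:R) else 0) * (if k = Fin.last (n+1) then 1 else 0)
        - (if j = Fin.last (n+1) then 1 else 0) * (if k = 0 then 1 else 0)) * M.det := by
  have h0l : (0 : Fin (n+2)) ≠ Fin.last (n+1) := by simp [Fin.ext_iff]
  by_cases hj0 : j = 0
  · subst hj0
    rw [Matrix.updateRow_eq_self]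
    by_cases hkl : k = Fin.last (n+1)
    · subst hkl
      rw [Matrix.updateRow_eq_self]
      simp [h0l, Ne.symm h0l]
    · have hz : (M.updateRow (Fin.last (n+1)) (M k)).det = 0 := by
        by_cases hk0 : k = 0
        · subst hk0
          exact Matrix.det_zero_of_row_eq h0l
            (by rw [Matrix.updateRow_ne h0l, Matrix.updateRow_self])
        · exact Matrix.det_zero_of_row_eq (show k ≠ Fin.last (n+1) from hkl)
            (by rw [Matrix.updateRow_ne hkl, Matrix.updateRow_self])
      rw [hz]
      simp [hkl, h0l]
  · by_cases hjl : j = Fin.last (n+1)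
    · subst hjl
      by_cases hk0 : k = 0
      · subst hk0
        have hB : (M.updateRow 0 (M (Fin.last (n+1)))).updateRow (Fin.last (n+1)) (M 0)
            = M.submatrix (Equiv.swap 0 (Fin.last (n+1))) id := by
          ext a b
          rcases eq_or_ne a (Fin.last (n+1)) with rfl | hal
          · rw [Matrix.updateRow_self]
            simp [Equiv.swap_apply_right]
          · rw [Matrix.updateRow_ne hal]
            rcases eq_or_ne a 0 with rfl | ha0
            · rw [Matrix.updateRow_self]; simp [Equiv.swap_apply_left]
            · rw [Matrix.updateRow_ne ha0]
              simp [Equiv.swap_apply_of_ne_of_ne ha0 hal]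
        rw [hB, Matrix.det_permute, Equiv.Perm.sign_swap h0l]
        simp [h0l, Ne.symm h0l]
      · have hz : ((M.updateRow 0 (M (Fin.last (n+1)))).updateRow (Fin.last (n+1)) (M k)).det
            = 0 := by
          by_cases hkl : k = Fin.last (n+1)
          · subst hkl
            refine Matrix.det_zero_of_row_eq h0l ?_
            rw [Matrix.updateRow_ne h0l, Matrix.updateRow_self, Matrix.updateRow_self]
          · refine Matrix.det_zero_of_row_eq (show k ≠ Fin.last (n+1) from hkl) ?_
            rw [Matrix.updateRow_ne hkl, Matrix.updateRow_ne hk0, Matrix.updateRow_self]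
        rw [hz]
        simp [hk0, Ne.symm h0l]
    · -- j not 0 or last: rows 0 and j coincide
      have hj0' : (0 : Fin (n+2)) ≠ j := fun h => hj0 h.symm
      have hz : ((M.updateRow 0 (M j)).updateRow (Fin.last (n+1)) (M k)).det = 0 := by
        refine Matrix.det_zero_of_row_eq hj0' ?_
        rw [Matrix.updateRow_ne h0l, Matrix.updateRow_self,
          Matrix.updateRow_ne (show j ≠ Fin.last (n+1) from hjl), Matrix.updateRow_ne hj0]
      rw [hz]
      simp [hj0, hjl]

lemma myStepA {n : ℕ} (M : Matrix (Fin (n+2)) (Fin (n+2)) R) (v w : Fin (n+2) → R) :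
    ((M.updateRow 0 (v ᵥ* M)).updateRow (Fin.last (n+1)) (w ᵥ* M)).det
      = (v 0 * w (Fin.last (n+1)) - v (Fin.last (n+1)) * w 0) * M.det := by
  have h0l : (0 : Fin (n+2)) ≠ Fin.last (n+1) := by simp [Fin.ext_iff]
  have hvm : ∀ v : Fin (n+2) → R, v ᵥ* M = ∑ k, v k • M k := fun v => by
    ext j; simp [Matrix.vecMul, dotProduct, Finset.sum_apply]
  rw [hvm w]; erw [myDetUpdateRowSum]
  have hrow : ∀ k, ((M.updateRow 0 (v ᵥ* M)).updateRow (Fin.last (n+1)) (M k)).det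
      = ∑ j, v j * ((M.updateRow 0 (M j)).updateRow (Fin.last (n+1)) (M k)).det := by
    intro k
    rw [myUpdateRowComm _ h0l, hvm v]; erw [myDetUpdateRowSum]
    congr 1; ext j
    rw [myUpdateRowComm _ (Ne.symm h0l)]
  simp only [hrow, myDval]
  simp only [mul_sub, mul_ite, mul_one, mul_zero, sub_mul, ite_mul, zero_mul, one_mul,
    Finset.sum_sub_distrib, Finset.mul_sum, Finset.sum_ite_eq', Finset.mem_univ, if_true]
  simp [Finset.sum_ite_eq', Finset.sum_ite_eq]
  ring

lemma myLapRow {n : ℕ} (A : Matrix (Fin (n+1)) (Fin (n+1)) R) (i i' : Fin (n+1)) (c : R) :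
    (A.updateRow i (fun j => if i' = j then c else 0)).det
      = (-1)^(i + i' : ℕ) * c * (A.submatrix i.succAbove i'.succAbove).det := by
  rw [Matrix.det_succ_row _ i]
  simp_rw [Matrix.updateRow_self, Matrix.submatrix_updateRow_succAbove]
  rw [Fintype.sum_eq_single i' (fun j hj => by simp [Ne.symm hj])]
  simp

lemma myZb {n : ℕ} (M : Matrix (Fin (n+2)) (Fin (n+2)) R) :
    M.det * (M.det * (M.submatrix (Fin.succ ∘ Fin.castSucc) (Fin.succ ∘ Fin.castSucc)).det)
      = M.det * ((M.submatrix Fin.succ Fin.succ).det * (M.submatrix Fin.castSucc Fin.castSucc).det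
          - (M.submatrix Fin.castSucc Fin.succ).det * (M.submatrix Fin.succ Fin.castSucc).det) := by
  have h0l : (0 : Fin (n+2)) ≠ Fin.last (n+1) := by simp [Fin.ext_iff]
  have hadj : ∀ i : Fin (n+2),
      (adjugate M i) ᵥ* M = fun j => if i = j then M.det else 0 := by
    intro i
    funext j
    have : ((adjugate M) * M) i j = (M.det • (1 : Matrix (Fin (n+2)) (Fin (n+2)) R)) i j := by
      rw [Matrix.adjugate_mul]
    simpa [Matrix.mul_apply, Matrix.vecMul, dotProduct, Matrix.one_apply,
      mul_ite, mul_one, mul_zero] using this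
  have h := myStepA M (adjugate M 0) (adjugate M (Fin.last (n+1)))
  rw [hadj 0, hadj (Fin.last (n+1))] at h
  -- compute LHS of h
  rw [myUpdateRowComm _ h0l] at h
  rw [myLapRow _ 0 0 M.det] at h
  have hsub : (M.updateRow (Fin.last (n+1)) (fun j => if Fin.last (n+1) = j then M.det else 0)).submatrix (Fin.succAbove 0) (Fin.succAbove 0)
      = (M.submatrix Fin.succ Fin.succ).updateRow (Fin.last n)
          (fun j => if Fin.last n = j then M.det else 0) := by
    ext a b
    rcases eq_or_ne a (Fin.last n) with rfl | ha
    · simp only [Matrix.submatrix_apply, Fin.succAbove_zero, Matrix.updateRow_apply,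
        ← Fin.succ_last, Fin.succ_inj]
    · have : Fin.succ a ≠ Fin.last (n+1) := by
        rw [← Fin.succ_last]; exact fun hc => ha (Fin.succ_inj.mp hc)
      simp [Matrix.submatrix_apply, Fin.succAbove_zero, Matrix.updateRow_ne this,
        Matrix.updateRow_ne ha]
  rw [hsub, myLapRow _ (Fin.last n) (Fin.last n) M.det] at h
  have hsign : ((-1 : R))^(Fin.last n + Fin.last n : ℕ) = 1 :=
    Even.neg_one_pow (by exact Even.add_self _)
  rw [hsign] at h
  have hint : ((M.submatrix Fin.succ Fin.succ).submatrix
        (Fin.succAbove (Fin.last n)) (Fin.succAbove (Fin.last n)))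
      = M.submatrix (Fin.succ ∘ Fin.castSucc) (Fin.succ ∘ Fin.castSucc) := by
    simp [Fin.succAbove_last, Matrix.submatrix_submatrix]
  rw [hint] at h
  -- now adjugate entries
  have ha00 : adjugate M 0 0 = (M.submatrix Fin.succ Fin.succ).det := by
    rw [Matrix.adjugate_fin_succ_eq_det_submatrix]
    simp [Fin.succAbove_zero]
  have hall : adjugate M (Fin.last (n+1)) (Fin.last (n+1))
      = (M.submatrix Fin.castSucc Fin.castSucc).det := by
    rw [Matrix.adjugate_fin_succ_eq_det_submatrix]
    rw [Fin.succAbove_last]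
    rw [show ((Fin.last (n+1) : Fin (n+2)) + Fin.last (n+1) : ℕ) = 2*(n+1) by
      simp [Fin.val_last]; ring]
    simp [pow_mul]
  have ha0l : adjugate M 0 (Fin.last (n+1))
      = (-1)^(n+1) * (M.submatrix Fin.castSucc Fin.succ).det := by
    rw [Matrix.adjugate_fin_succ_eq_det_submatrix]
    simp [Fin.succAbove_last, Fin.succAbove_zero, Fin.val_last]
  have hal0 : adjugate M (Fin.last (n+1)) 0
      = (-1)^(n+1) * (M.submatrix Fin.succ Fin.castSucc).det := by
    rw [Matrix.adjugate_fin_succ_eq_det_submatrix]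
    simp [Fin.succAbove_last, Fin.succAbove_zero, Fin.val_last]
  rw [ha00, hall, ha0l, hal0] at h
  have h2 : ((-1:R)^(n+1)) * ((-1:R)^(n+1)) = 1 := by
    rw [← pow_add]
    exact Even.neg_one_pow (by exact Even.add_self _)
  simp only [Fin.val_zero, add_zero, pow_zero, one_mul] at h
  linear_combination h - (M.det * (M.submatrix Fin.castSucc Fin.succ).det *
    (M.submatrix Fin.succ Fin.castSucc).det) * h2

end DJ

lemma myDJ {n : ℕ} (M : Matrix (Fin (n+2)) (Fin (n+2)) ℚ) :
    M.det * (M.submatrix (Fin.succ ∘ Fin.castSucc) (Fin.succ ∘ Fin.castSucc)).det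
      = (M.submatrix Fin.succ Fin.succ).det * (M.submatrix Fin.castSucc Fin.castSucc).det
          - (M.submatrix Fin.castSucc Fin.succ).det * (M.submatrix Fin.succ Fin.castSucc).det := by
  classical
  set S := MvPolynomial (Fin (n+2) × Fin (n+2)) ℤ
  let X : Matrix (Fin (n+2)) (Fin (n+2)) S := Matrix.of fun i j => MvPolynomial.X (i, j)
  have hX : X.det ≠ 0 := by
    intro hc
    have h1 := congrArg (MvPolynomial.eval (fun p : (Fin (n+2)) × (Fin (n+2)) =>
      if p.1 = p.2 then (1:ℤ) else 0)) hc
    rw [map_zero, RingHom.map_det, RingHom.mapMatrix_apply] at h1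
    have h2 : (X.map (MvPolynomial.eval (fun p : (Fin (n+2)) × (Fin (n+2)) =>
        if p.1 = p.2 then (1:ℤ) else 0))) = (1 : Matrix (Fin (n+2)) (Fin (n+2)) ℤ) := by
      ext i j
      simp [X, Matrix.one_apply]
    rw [h2, Matrix.det_one] at h1
    exact one_ne_zero h1
  have key := mul_left_cancel₀ hX (myZb X)
  let φ : S →+* ℚ := (MvPolynomial.eval₂Hom (Int.castRingHom ℚ) (fun p => M p.1 p.2))
  have hmap : X.map φ = M := by
    ext i j
    exact MvPolynomial.eval₂Hom_X' _ _ _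
  have hsubmap : ∀ (f g : Fin n → Fin (n+2)), (X.submatrix f g).map φ = M.submatrix f g := by
    intro f g; ext i j; exact MvPolynomial.eval₂Hom_X' _ _ _
  have hsubmap' : ∀ (f g : Fin (n+1) → Fin (n+2)), (X.submatrix f g).map φ = M.submatrix f g := by
    intro f g; ext i j; exact MvPolynomial.eval₂Hom_X' _ _ _
  have h3 := congrArg φ key
  simp only [_root_.map_mul, map_sub, RingHom.map_det, RingHom.mapMatrix_apply,
    Matrix.submatrix_map, hmap, hsubmap, hsubmap'] at h3
  exact h3

noncomputable def myP (x b : ℕ) : ℚ := ∏ i ∈ Finset.Icc 1 b, ((x + i : ℕ) : ℚ)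

noncomputable def myg (n j : ℕ) : ℚ :=
  ∏ i ∈ Finset.Icc 1 j, ((2 * (n:ℚ) + i + j) / ((i:ℚ) + j))

noncomputable def myF (n m : ℕ) : ℚ := ∏ j ∈ Finset.Icc 1 (m - 1), myg n j

lemma myP_pos (x b : ℕ) : 0 < myP x b := by
  apply Finset.prod_pos
  intro i hi
  have : 1 ≤ i := (Finset.mem_Icc.mp hi).1
  exact_mod_cast Nat.lt_of_lt_of_le this (by omega)

lemma myP_succ (x b : ℕ) : myP x (b+1) = myP x b * ((x:ℚ) + b + 1) := by
  rw [myP, Finset.prod_Icc_succ_top (Nat.le_add_left 1 b), ← myP]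
  push_cast
  ring

lemma myP_shift (x b : ℕ) : myP (x+1) b * ((x:ℚ) + 1) = myP x b * ((x:ℚ) + b + 1) := by
  induction b with
  | zero => simp [myP]
  | succ b ih =>
      rw [myP_succ, myP_succ]
      push_cast
      push_cast at ih
      nlinarith [ih]

lemma myg_eq (n j : ℕ) : myg n j = myP (2*n + j) j / myP j j := by
  rw [myg, myP, myP, ← Finset.prod_div_distrib]
  apply Finset.prod_congr rfl
  intro i hi
  push_cast
  ring_nf

lemma myg_pos (n j : ℕ) : 0 < myg n j := by
  rw [myg_eq]
  exact div_pos (myP_pos _ _) (myP_pos _ _)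

lemma myF_pos (n m : ℕ) : 0 < myF n m := Finset.prod_pos fun j _ => myg_pos n j

lemma myF_succ (n m : ℕ) : myF n (m+1) = myF n m * myg n m := by
  cases m with
  | zero => simp [myF, myg]
  | succ k =>
      rw [myF, myF]
      simp only [Nat.add_sub_cancel]
      rw [Finset.prod_Icc_succ_top (Nat.le_add_left 1 k)]

lemma myg_n_succ (n j : ℕ) :
    myg (n+1) j * ((2*(n:ℚ)+j+1) * (2*(n:ℚ)+j+2))
      = myg n j * ((2*(n:ℚ)+2*j+1) * (2*(n:ℚ)+2*j+2)) := by
  have s1 := myP_shift (2*n+j+1) j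
  have s2 := myP_shift (2*n+j) j
  rw [show 2*n+j+1+1 = 2*n+j+2 from by omega] at s1
  push_cast at s1 s2
  have key : myP (2*n+j+2) j * ((2*(n:ℚ)+j+1) * (2*(n:ℚ)+j+2))
      = myP (2*n+j) j * ((2*(n:ℚ)+2*j+1) * (2*(n:ℚ)+2*j+2)) := by
    linear_combination (2*(n:ℚ)+j+1) * s1 + (2*(n:ℚ)+2*j+2) * s2
  rw [myg_eq, myg_eq, show 2*(n+1)+j = 2*n+j+2 from by omega,
    div_mul_eq_mul_div, div_mul_eq_mul_div, key]

lemma myg_m_succ (n j : ℕ) :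
    myg n (j+1) * ((2*(n:ℚ)+j+1) * ((2*(j:ℚ)+1) * (2*(j:ℚ)+2)))
      = myg n j * ((2*(n:ℚ)+2*j+1) * (2*(n:ℚ)+2*j+2) * ((j:ℚ)+1)) := by
  have f1 := myP_succ (2*n+j+1) j
  have f2 := myP_shift (2*n+j) j
  have f3 := myP_succ (j+1) j
  have f4 := myP_shift j j
  push_cast at f1 f2 f3 f4
  have hD1 : myP (j+1) (j+1) ≠ 0 := ne_of_gt (myP_pos _ _)
  have hD0 : myP j j ≠ 0 := ne_of_gt (myP_pos _ _)
  rw [myg_eq, myg_eq, show 2*n+(j+1) = 2*n+j+1 from by omega,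
    div_mul_eq_mul_div, div_mul_eq_mul_div, div_eq_div_iff hD1 hD0]
  linear_combination (myP j j * (2*(n:ℚ)+j+1) * (2*(j:ℚ)+1) * (2*(j:ℚ)+2)) * f1
    + ((2*(n:ℚ)+2*j+2) * myP j j * (2*(j:ℚ)+1) * (2*(j:ℚ)+2)) * f2
    - (myP (2*n+j) j * (2*(n:ℚ)+2*j+1) * (2*(n:ℚ)+2*j+2) * (2*(j:ℚ)+2)) * f4
    - (myP (2*n+j) j * (2*(n:ℚ)+2*j+1) * (2*(n:ℚ)+2*j+2) * ((j:ℚ)+1)) * f3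

lemma myT (n m : ℕ) :
    myF (n+2) m * myF n m *
      (((2*(n:ℚ)+3)*(2*(n:ℚ)+4)) * ((2*(n:ℚ)+m+1)*(2*(n:ℚ)+m+2))
        * ((2*(n:ℚ)+m+2)*(2*(n:ℚ)+m+3)))
    = myF (n+1) m ^ 2 *
      (((2*(n:ℚ)+2*m+1)*(2*(n:ℚ)+2*m+2)) * ((2*(n:ℚ)+2)*(2*(n:ℚ)+3))
        * ((2*(n:ℚ)+3)*(2*(n:ℚ)+4))) := by
  induction m with
  | zero =>
      have h : myF (n+2) 0 = 1 ∧ myF n 0 = 1 ∧ myF (n+1) 0 = 1 := by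
        refine ⟨?_, ?_, ?_⟩ <;> · rw [myF]; simp
      rw [h.1, h.2.1, h.2.2]
      push_cast
      ring
  | succ m IH =>
      have h1 := myg_n_succ n m
      have h2 := myg_n_succ (n+1) m
      push_cast at h2
      rw [myF_succ (n+2) m, myF_succ n m, myF_succ (n+1) m]
      have hu : ((2*(n:ℚ)+m+1)*(2*(n:ℚ)+m+2)) ≠ 0 := by
        have h1 : (0:ℚ) < 2*(n:ℚ)+m+1 := by positivity
        have h2 : (0:ℚ) < 2*(n:ℚ)+m+2 := by positivity
        positivity
      apply mul_right_cancel₀ hu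
      push_cast
      linear_combination (myg (n+2) m * ((2*(n:ℚ)+m+3)*(2*(n:ℚ)+m+4)) * myg n m) * IH
        + (myF (n+1) m^2 * ((2*(n:ℚ)+2*m+1)*(2*(n:ℚ)+2*m+2)) * ((2*(n:ℚ)+2)*(2*(n:ℚ)+3))
            * ((2*(n:ℚ)+3)*(2*(n:ℚ)+4)) * myg n m) * h2
        - (myF (n+1) m^2 * ((2*(n:ℚ)+2)*(2*(n:ℚ)+3)) * ((2*(n:ℚ)+3)*(2*(n:ℚ)+4))
            * ((2*(n:ℚ)+2*m+3)*(2*(n:ℚ)+2*m+4)) * myg (n+1) m) * h1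

lemma myStep (n m : ℕ) :
    myF (n+2) m * myF n (m+2) = myF (n+1) m * myF (n+1) (m+2) - myF (n+1) (m+1)^2 := by
  have hT := myT n m
  have h1 := myg_n_succ n m
  have hb0 := myg_m_succ n m
  have hb1 := myg_m_succ (n+1) m
  push_cast at hb1
  have c1 : (0:ℚ) < 2*(n:ℚ)+m+1 := by positivity
  have c2 : (0:ℚ) < 2*(n:ℚ)+m+2 := by positivity
  have c3 : (0:ℚ) < 2*(n:ℚ)+m+3 := by positivity
  have c4 : (0:ℚ) < 2*(n:ℚ)+2*m+1 := by positivity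
  have c5 : (0:ℚ) < 2*(n:ℚ)+2*m+2 := by positivity
  have c6 : (0:ℚ) < 2*(m:ℚ)+1 := by positivity
  have c7 : (0:ℚ) < 2*(m:ℚ)+2 := by positivity
  have c8 : (0:ℚ) < (m:ℚ)+1 := by positivity
  have c9 : (0:ℚ) < 2*(n:ℚ)+3 := by positivity
  have c10 : (0:ℚ) < 2*(n:ℚ)+4 := by positivity
  have c11 : (0:ℚ) < 2*(n:ℚ)+2 := by positivity
  have hF0 : myF n m ≠ 0 := ne_of_gt (myF_pos n m)
  have hg1m : myg (n+1) m ≠ 0 := ne_of_gt (myg_pos (n+1) m)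
  have e1 : myg n m = myg (n+1) m * ((2*(n:ℚ)+m+1) * (2*(n:ℚ)+m+2))
      / ((2*(n:ℚ)+2*m+1) * (2*(n:ℚ)+2*m+2)) := by
    rw [eq_div_iff (by positivity)]
    linear_combination - h1
  have e01 : myg n (m+1) = myg n m * ((2*(n:ℚ)+2*m+1) * (2*(n:ℚ)+2*m+2) * ((m:ℚ)+1))
      / ((2*(n:ℚ)+m+1) * ((2*(m:ℚ)+1) * (2*(m:ℚ)+2))) := by
    rw [eq_div_iff (by positivity)]
    linear_combination hb0
  have e11 : myg (n+1) (m+1) = myg (n+1) m * ((2*(n:ℚ)+2*m+3) * (2*(n:ℚ)+2*m+4) * ((m:ℚ)+1))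
      / ((2*(n:ℚ)+m+3) * ((2*(m:ℚ)+1) * (2*(m:ℚ)+2))) := by
    rw [eq_div_iff (by positivity)]
    linear_combination hb1
  have eT : myF (n+2) m = myF (n+1) m ^ 2 *
      (((2*(n:ℚ)+2*m+1)*(2*(n:ℚ)+2*m+2)) * ((2*(n:ℚ)+2)*(2*(n:ℚ)+3))
        * ((2*(n:ℚ)+3)*(2*(n:ℚ)+4)))
      / (myF n m * (((2*(n:ℚ)+3)*(2*(n:ℚ)+4)) * ((2*(n:ℚ)+m+1)*(2*(n:ℚ)+m+2))
        * ((2*(n:ℚ)+m+2)*(2*(n:ℚ)+m+3)))) := by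
    rw [eq_div_iff (by positivity)]
    linear_combination hT
  rw [show m+2 = (m+1)+1 from rfl, myF_succ n (m+1), myF_succ n m,
    myF_succ (n+1) (m+1), myF_succ (n+1) m, eT, e01, e11, e1]
  field_simp
  ring

lemma myCatRec (m : ℕ) : (m+2) * catalan (m+1) = 2*(2*m+1) * catalan m := by
  have h2 := Nat.succ_mul_centralBinom_succ m
  have h3 := succ_mul_catalan_eq_centralBinom m
  have h1' : (m+2) * catalan (m+1) = Nat.centralBinom (m+1) := by
    simpa using succ_mul_catalan_eq_centralBinom (m+1)
  have key : (m+1) * ((m+2) * catalan (m+1)) = (m+1) * (2*(2*m+1) * catalan m) := by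
    calc (m+1) * ((m+2) * catalan (m+1)) = (m+1) * Nat.centralBinom (m+1) := by rw [h1']
      _ = 2*(2*m+1) * Nat.centralBinom m := h2
      _ = 2*(2*m+1) * ((m+1) * catalan m) := by rw [← h3]
      _ = (m+1) * (2*(2*m+1) * catalan m) := by ring
  exact Nat.eq_of_mul_eq_mul_left (by omega) key

lemma myCat (m : ℕ) : ((catalan m : ℚ)) = myF 1 m := by
  induction m with
  | zero => simp [myF, catalan_zero]
  | succ m ih =>
      have hg : myg 1 m * (((m:ℚ)+1)*((m:ℚ)+2)) = (2*(m:ℚ)+1)*(2*(m:ℚ)+2) := by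
        have s1 := myP_shift (m+1) m
        have s2 := myP_shift m m
        rw [show m+1+1 = m+2 from rfl] at s1
        push_cast at s1 s2
        have hP : myP m m ≠ 0 := ne_of_gt (myP_pos m m)
        rw [myg_eq, show 2*1+m = m+2 from by omega, div_mul_eq_mul_div,
          div_eq_iff hP]
        linear_combination ((m:ℚ)+1) * s1 + (2*(m:ℚ)+2) * s2
      have hrec := myCatRec m
      have hrecq : ((m:ℚ)+2) * (catalan (m+1) : ℚ) = 2*(2*(m:ℚ)+1) * (catalan m : ℚ) := by
        exact_mod_cast congrArg (fun k : ℕ => (k : ℚ)) hrec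
      rw [myF_succ, ← ih]
      have hne : (((m:ℚ)+1)*((m:ℚ)+2)) ≠ 0 := by positivity
      apply mul_right_cancel₀ hne
      calc (catalan (m+1) : ℚ) * (((m:ℚ)+1)*((m:ℚ)+2))
          = ((m:ℚ)+1) * (((m:ℚ)+2) * (catalan (m+1):ℚ)) := by ring
        _ = ((m:ℚ)+1) * (2*(2*(m:ℚ)+1) * (catalan m : ℚ)) := by rw [hrecq]
        _ = (catalan m:ℚ) * ((2*(m:ℚ)+1)*(2*(m:ℚ)+2)) := by ring
        _ = (catalan m:ℚ) * (myg 1 m * (((m:ℚ)+1)*((m:ℚ)+2))) := by rw [hg]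
        _ = (catalan m:ℚ) * myg 1 m * (((m:ℚ)+1)*((m:ℚ)+2)) := by ring

lemma myMain : ∀ n m : ℕ,
    (Matrix.of (fun i j : Fin n => (catalan (i.1 + j.1 + m) : ℚ))).det = myF n m := by
  intro n
  induction n using Nat.strong_induction_on with
  | _ n ih =>
    match n, ih with
    | 0, ih =>
      intro m
      rw [Matrix.det_fin_zero, myF, Finset.prod_eq_one]
      intro j hj
      rw [myg, Finset.prod_eq_one]
      intro i hi
      have h1 : 1 ≤ i := (Finset.mem_Icc.mp hi).1
      have h2 : (0:ℚ) < (i:ℚ) + j := by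
        have : (0:ℚ) < (i:ℚ) := by exact_mod_cast h1
        positivity
      rw [Nat.cast_zero, show 2*(0:ℚ) + i + j = (i:ℚ) + j by ring]
      exact div_self (ne_of_gt h2)
    | 1, ih =>
      intro m
      rw [Matrix.det_fin_one, Matrix.of_apply]
      simpa using myCat m
    | (k+2), ih =>
      intro m
      have ih1 := ih (k+1) (by omega)
      have ih0 := ih k (by omega)
      set M : Matrix (Fin (k+2)) (Fin (k+2)) ℚ :=
        Matrix.of (fun i j : Fin (k+2) => (catalan (i.1 + j.1 + m) : ℚ)) with hM
      have hCC : M.submatrix Fin.castSucc Fin.castSucc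
          = Matrix.of (fun i j : Fin (k+1) => (catalan (i.1 + j.1 + m) : ℚ)) := by
        ext i j; simp [hM, Matrix.submatrix_apply]
      have hSS : M.submatrix Fin.succ Fin.succ
          = Matrix.of (fun i j : Fin (k+1) => (catalan (i.1 + j.1 + (m+2)) : ℚ)) := by
        ext i j
        simp only [hM, Matrix.submatrix_apply, Matrix.of_apply, Fin.val_succ]
        norm_cast
        congr 1
        omega
      have hCS : M.submatrix Fin.castSucc Fin.succ
          = Matrix.of (fun i j : Fin (k+1) => (catalan (i.1 + j.1 + (m+1)) : ℚ)) := by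
        ext i j
        simp only [hM, Matrix.submatrix_apply, Matrix.of_apply, Fin.val_succ,
          Fin.coe_castSucc]
        norm_cast
        congr 1
        omega
      have hSC : M.submatrix Fin.succ Fin.castSucc
          = Matrix.of (fun i j : Fin (k+1) => (catalan (i.1 + j.1 + (m+1)) : ℚ)) := by
        ext i j
        simp only [hM, Matrix.submatrix_apply, Matrix.of_apply, Fin.val_succ,
          Fin.coe_castSucc]
        norm_cast
        congr 1
        omega
      have hInt : M.submatrix (Fin.succ ∘ Fin.castSucc) (Fin.succ ∘ Fin.castSucc)
          = Matrix.of (fun i j : Fin k => (catalan (i.1 + j.1 + (m+2)) : ℚ)) := by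
        ext i j
        simp only [hM, Matrix.submatrix_apply, Matrix.of_apply, Function.comp_apply,
          Fin.val_succ, Fin.coe_castSucc]
        norm_cast
        congr 1
        omega
      have hdj := myDJ M
      rw [hCC, hSS, hCS, hSC, hInt, ih1 m, ih1 (m+2), ih1 (m+1), ih0 (m+2)] at hdj
      have hne : myF k (m+2) ≠ 0 := ne_of_gt (myF_pos k (m+2))
      apply mul_right_cancel₀ hne
      rw [hdj, myStep k m]
      ring

theorem stmt_10 (m n : ℕ) (hm : 1 ≤ m) (hn : 1 ≤ n) :
    Matrix.det (Matrix.of (fun i j : Fin n => (catalan (i.1 + j.1 + m) : ℚ)))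
      = ∏ j ∈ Finset.Icc 1 (m - 1), ∏ i ∈ Finset.Icc 1 j,
          ((2 * n + i + j : ℚ) / (i + j : ℚ)) := by
  exact myMain n m
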